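/- Fix H ∈ (0,1), H ≠ 1/2, and constants c, c' ∈ ℝ. Define g₊ : ℝ → ℝ by g₊(t) = c' + c'|t|^{2H} - c'|1-t|^{2H} for t < 0, g₊(t) = c' + c|t|^{2H} - c'|1-t|^{2H} for 0 ≤ t ≤ 1, and g₊(t) = c' + c|t|^{2H} - c|1-t|^{2H} for t > 1. Then g₊ satisfies, for all t ∈ ℝ and all T > 0: g₊(t) = (T+1)^{2H} g₊((T+t)/(T+1)) - T^{2H} g₊((T+t)/T) - (T+1)^{2H} g₊(T/(T+1)) + T^{2H} g₊(1). -/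

import Mathlib

set_option maxHeartbeats 1600000


/-- The piecewise function g₊ (case H ≠ 1/2) satisfies the functional equation
g₊(t) = (T+1)^{2H} g₊((T+t)/(T+1)) - T^{2H} g₊((T+t)/T)
        - (T+1)^{2H} g₊(T/(T+1)) + T^{2H} g₊(1) for all t ∈ ℝ, T > 0. -/
theorem gplus_solves_equation (H c c' : ℝ) (hH : H ∈ Set.Ioo (0 : ℝ) 1) (hH2 : H ≠ 1 / 2)
    (g : ℝ → ℝ)
    (hg : ∀ t : ℝ, g t =
      if t < 0 then c' + c' * |t| ^ (2 * H) - c' * |1 - t| ^ (2 * H)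
      else if t ≤ 1 then c' + c * |t| ^ (2 * H) - c' * |1 - t| ^ (2 * H)
      else c' + c * |t| ^ (2 * H) - c * |1 - t| ^ (2 * H)) :
    ∀ t : ℝ, ∀ T : ℝ, 0 < T →
      g t = (T + 1) ^ (2 * H) * g ((T + t) / (T + 1)) - T ^ (2 * H) * g ((T + t) / T)
            - (T + 1) ^ (2 * H) * g (T / (T + 1)) + T ^ (2 * H) * g 1 := by
  have hHpos : 0 < 2 * H := by linarith [hH.1]
  have key : ∀ s : ℝ, g s = c' + (if s < 0 then c' else c) * |s| ^ (2 * H)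
      - (if s ≤ 1 then c' else c) * |1 - s| ^ (2 * H) := by
    intro s
    rw [hg s]
    by_cases h1 : s < 0 <;> by_cases h2 : s ≤ 1 <;> simp [h1, h2] <;> linarith
  intro t T hT
  have hT1 : (0:ℝ) < T + 1 := by linarith
  have habs : ∀ a b : ℝ, 0 < b → |a / b| ^ (2 * H) = |a| ^ (2 * H) / b ^ (2 * H) := by
    intro a b hb
    rw [abs_div, abs_of_pos hb, Real.div_rpow (abs_nonneg a) hb.le]
  rw [key t, key ((T + t) / (T + 1)), key ((T + t) / T), key (T / (T + 1)), key 1]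
  -- condition rewrites
  have c1 : ((T + t) / (T + 1) < 0) ↔ t < -T := by
    rw [div_neg_iff]
    constructor
    · rintro (⟨h, h'⟩ | ⟨h, h'⟩) <;> linarith
    · intro h; exact Or.inr ⟨by linarith, hT1⟩
  have c2 : ((T + t) / (T + 1) ≤ 1) ↔ t ≤ 1 := by
    rw [div_le_one hT1]; constructor <;> intro h <;> linarith
  have c3 : ((T + t) / T < 0) ↔ t < -T := by
    rw [div_neg_iff]
    constructor
    · rintro (⟨h, h'⟩ | ⟨h, h'⟩) <;> linarith
    · intro h; exact Or.inr ⟨by linarith, hT⟩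
  have c4 : ((T + t) / T ≤ 1) ↔ t ≤ 0 := by
    rw [div_le_one hT]; constructor <;> intro h <;> linarith
  have c5 : ¬ (T / (T + 1) < 0) := not_lt.mpr (by positivity)
  have c6 : T / (T + 1) ≤ 1 := by rw [div_le_one hT1]; linarith
  have c7 : ¬ ((1:ℝ) < 0) := by norm_num
  have c8 : (1:ℝ) ≤ 1 := le_refl 1
  -- abs rewrites
  have a1 : |1 - (T + t) / (T + 1)| ^ (2 * H) = |1 - t| ^ (2 * H) / (T + 1) ^ (2 * H) := by
    rw [show 1 - (T + t) / (T + 1) = (1 - t) / (T + 1) by field_simp; ring, habs _ _ hT1]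
  have a2 : |1 - (T + t) / T| ^ (2 * H) = |t| ^ (2 * H) / T ^ (2 * H) := by
    rw [show 1 - (T + t) / T = (-t) / T by field_simp; ring, habs _ _ hT, abs_neg]
  have a3 : |1 - T / (T + 1)| ^ (2 * H) = 1 / (T + 1) ^ (2 * H) := by
    rw [show 1 - T / (T + 1) = 1 / (T + 1) by field_simp; ring, habs _ _ hT1, abs_one, Real.one_rpow]
  simp only [c1, c2, c3, c4, if_neg c5, if_pos c6, if_neg c7, if_pos c8, a1, a2, a3,
    habs (T + t) (T + 1) hT1, habs (T + t) T hT, habs T (T + 1) hT1,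
    abs_of_pos hT, abs_one, Real.one_rpow, show (1:ℝ) - 1 = 0 by ring, abs_zero,
    Real.zero_rpow (ne_of_gt hHpos)]
  have hA : (0:ℝ) < (T + 1) ^ (2 * H) := Real.rpow_pos_of_pos hT1 _
  have hB : (0:ℝ) < T ^ (2 * H) := Real.rpow_pos_of_pos hT _
  split_ifs <;> try linarith
  all_goals try (field_simp; ring)
  all_goals
    (have ht0 : t = 0 := by linarith
     subst ht0
     simp only [abs_zero]
     field_simp
     rw [Real.zero_rpow (ne_of_gt (by linarith [hH.1]) : H * 2 ≠ 0)]; ring)
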